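/- arXiv:2307.11330 — 3 statements merged into one kernel-verified Lean document; each statement's English description precedes it below -/
import Mathlib

section
/- Let n and m be positive integers and let x_1, ..., x_n and y_1, ..., y_n be integers such that the multiset {x_1, ..., x_n} is not equal to the multiset {y_1, ..., y_n}, and such that \sum_{i=1}^{n} x_i^j = \sum_{i=1}^{n} y_i^j for every j = 1, 2, ..., m. Then n \geq m + 1. -/
open MvPolynomial Finset

/-- For a non-trivial solution of the PTE problem with size `n` and degree `m`
    to exist, one must have `n ≥ m + 1`. -/
theorem pte_size_ge_degree_add_one (n m : ℕ) (hn : 0 < n) (hm : 0 < m)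
    (x y : Fin n → ℤ)
    (hne : (List.ofFn x : Multiset ℤ) ≠ (List.ofFn y : Multiset ℤ))
    (hsum : ∀ j : ℕ, 1 ≤ j → j ≤ m → ∑ i, x i ^ j = ∑ i, y i ^ j) :
    n ≥ m + 1 := by
  by_contra hlt
  push_neg at hlt
  have hnm : n ≤ m := Nat.lt_succ_iff.mp hlt
  set f : Fin n → ℚ := fun i => (x i : ℚ) with hf
  set g : Fin n → ℚ := fun i => (y i : ℚ) with hg
  have hpsum : ∀ j, 1 ≤ j → j ≤ m →
      MvPolynomial.aeval f (MvPolynomial.psum (Fin n) ℚ j)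
        = MvPolynomial.aeval g (MvPolynomial.psum (Fin n) ℚ j) := by
    intro j h1 h2
    have h := hsum j h1 h2
    simp only [MvPolynomial.psum, map_sum, map_pow, MvPolynomial.aeval_X, hf, hg]
    exact_mod_cast h
  have hesymm : ∀ k, k ≤ m →
      MvPolynomial.aeval f (MvPolynomial.esymm (Fin n) ℚ k)
        = MvPolynomial.aeval g (MvPolynomial.esymm (Fin n) ℚ k) := by
    intro k
    induction k using Nat.strong_induction_on with
    | _ k ih =>
      intro hk
      rcases Nat.eq_zero_or_pos k with h0 | h0
      · subst h0; simp
      · have hk0 : (k : ℚ) ≠ 0 := Nat.cast_ne_zero.mpr h0.ne'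
        have hid := MvPolynomial.mul_esymm_eq_sum (Fin n) ℚ k
        have h1 := congrArg (MvPolynomial.aeval f) hid
        have h2 := congrArg (MvPolynomial.aeval g) hid
        simp only [map_mul, map_sum, map_pow, map_neg, map_one, map_natCast] at h1 h2
        apply mul_left_cancel₀ hk0
        rw [h1, h2]
        congr 1
        apply Finset.sum_congr rfl
        intro a ha
        rw [Finset.mem_filter, Finset.HasAntidiagonal.mem_antidiagonal] at ha
        obtain ⟨hak, halt⟩ := ha
        have h1a : 1 ≤ a.2 := by omega
        have h2a : a.2 ≤ m := by omega
        rw [ih a.1 halt (by omega), hpsum a.2 h1a h2a]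
  -- pass to multisets
  set s : Multiset ℚ := (List.ofFn x : Multiset ℤ).map (fun z : ℤ => (z : ℚ)) with hs
  set t : Multiset ℚ := (List.ofFn y : Multiset ℤ).map (fun z : ℤ => (z : ℚ)) with ht
  have hsu : s = Finset.univ.val.map f := by
    simp [hs, hf, List.ofFn_eq_map, Fin.univ_def, Fintype.elems, Multiset.map_map,
      Function.comp_def]
  have htu : t = Finset.univ.val.map g := by
    simp [ht, hg, List.ofFn_eq_map, Fin.univ_def, Fintype.elems, Multiset.map_map,
      Function.comp_def]
  have hcards : Multiset.card s = n := by simp [hs]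
  have hcardt : Multiset.card t = n := by simp [ht]
  have hes : ∀ k, k ≤ n → s.esymm k = t.esymm k := by
    intro k hk
    have := hesymm k (hk.trans hnm)
    rwa [MvPolynomial.aeval_esymm_eq_multiset_esymm, MvPolynomial.aeval_esymm_eq_multiset_esymm,
      ← hsu, ← htu] at this
  have hprod : (s.map fun a => Polynomial.X - Polynomial.C a).prod
      = (t.map fun a => Polynomial.X - Polynomial.C a).prod := by
    rw [Multiset.prod_X_sub_X_eq_sum_esymm, Multiset.prod_X_sub_X_eq_sum_esymm,
      hcards, hcardt]
    apply Finset.sum_congr rfl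
    intro j hj
    rw [Finset.mem_range] at hj
    rw [hes j (by omega)]
  have hst : s = t := by
    have := congrArg Polynomial.roots hprod
    rwa [Polynomial.roots_multiset_prod_X_sub_C, Polynomial.roots_multiset_prod_X_sub_C] at this
  exact hne (Multiset.map_injective (fun a b => by exact_mod_cast id) hst)
end

section
/- Let n, k, s be positive integers with k \leq n, let f : \{1, ..., n\} \to \mathbb{Z} be nonincreasing (f(1) \geq f(2) \geq ... \geq f(n)), and let I and J be two distinct k-element subsets of \{1, ..., n\} with |I \cap J| = r. For a subset A of \{1, ..., n\} define g_A(t) = f(t) + 1 if t \in A and g_A(t) = f(t) otherwise. Suppose that \sum_{t=1}^{n} (g_I(t) + n - t)^p = \sum_{t=1}^{n} (g_J(t) + n - t)^p for every p = 1, 2, ..., s + 1. Write I \setminus J = \{i_1 < i_2 < ... < i_{k-r}\} and J \setminus I = \{j_1 < j_2 < ... < j_{k-r}\}, and set x_t = f(i_t) - i_t and y_t = f(j_t) - j_t for t = 1, ..., k - r. Then x_1 > x_2 > ... > x_{k-r} and y_1 > y_2 > ... > y_{k-r}, the multisets \{x_1, ..., x_{k-r}\} and \{y_1, ..., y_{k-r}\}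 are distinct, and \sum_{t=1}^{k-r} x_t^q = \sum_{t=1}^{k-r} y_t^q for every q = 1, 2, ..., s. In particular the PTE problem with size k - r and degree s has a non-trivial solution. -/
open Finset

private lemma key_powsum {α : Type*} (m : ℕ) (A B : Finset α) (a : α → ℤ)
    (hcard : A.card = B.card)
    (h : ∀ p : ℕ, 1 ≤ p → p ≤ m + 1 →
      ∑ t ∈ A, ((a t + 1) ^ p - a t ^ p) = ∑ t ∈ B, ((a t + 1) ^ p - a t ^ p)) :
    ∀ q, q ≤ m → ∑ t ∈ A, a t ^ q = ∑ t ∈ B, a t ^ q := by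
  intro q
  induction q using Nat.strong_induction_on with
  | _ q ih =>
    intro hq
    rcases Nat.eq_zero_or_pos q with rfl | hq0
    · simp [hcard]
    · have hp := h (q + 1) (by omega) (by omega)
      have expand : ∀ z : ℤ, (z + 1) ^ (q + 1) - z ^ (q + 1) =
          ∑ j ∈ Finset.range (q + 1), z ^ j * ((q + 1).choose j : ℤ) := by
        intro z
        have h2 := add_pow z 1 (q + 1)
        simp only [one_pow, mul_one] at h2
        rw [h2, Finset.sum_range_succ]
        simp
      simp only [expand] at hp
      rw [Finset.sum_comm, Finset.sum_comm (s := B)] at hp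
      simp only [← Finset.sum_mul] at hp
      rw [Finset.sum_range_succ, Finset.sum_range_succ] at hp
      have hsame : ∑ j ∈ Finset.range q, (∑ t ∈ A, a t ^ j) * ((q + 1).choose j : ℤ) =
          ∑ j ∈ Finset.range q, (∑ t ∈ B, a t ^ j) * ((q + 1).choose j : ℤ) := by
        refine Finset.sum_congr rfl fun j hj => ?_
        have hjq := Finset.mem_range.mp hj
        rw [ih j hjq (by omega)]
      rw [hsame] at hp
      have hp2 := add_left_cancel hp
      have hchoose : ((q + 1).choose q : ℤ) = (q : ℤ) + 1 := by
        rw [Nat.choose_succ_self_right]; push_cast; ring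
      rw [hchoose] at hp2
      exact mul_right_cancel₀ (by positivity) hp2

private lemma shift_powsum {α : Type*} (m : ℕ) (A B : Finset α) (a : α → ℤ) (c : ℤ)
    (h : ∀ q, q ≤ m → ∑ t ∈ A, a t ^ q = ∑ t ∈ B, a t ^ q) :
    ∀ q, q ≤ m → ∑ t ∈ A, (a t + c) ^ q = ∑ t ∈ B, (a t + c) ^ q := by
  intro q hq
  have expand : ∀ z : ℤ, (z + c) ^ q =
      ∑ j ∈ Finset.range (q + 1), z ^ j * (c ^ (q - j) * (q.choose j : ℤ)) := by
    intro z
    rw [add_pow]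
    exact Finset.sum_congr rfl fun j hj => by ring
  simp only [expand]
  rw [Finset.sum_comm, Finset.sum_comm (s := B)]
  simp only [← Finset.sum_mul]
  refine Finset.sum_congr rfl fun j hj => ?_
  rw [h j (by have := Finset.mem_range.mp hj; omega)]

/-- Proposition 6.1 (combinatorial form). -/
theorem pte_solution_of_central_characters_eq
    (n k s r : ℕ) (hn : 0 < n) (hk : 0 < k) (hs : 0 < s) (hkn : k ≤ n)
    (f : Fin n → ℤ) (hf : ∀ i j : Fin n, i ≤ j → f j ≤ f i)
    (I J : Finset (Fin n)) (hI : I.card = k) (hJ : J.card = k)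
    (hIJ : I ≠ J) (hr : (I ∩ J).card = r)
    (hIJcard : (I \ J).card = k - r) (hJIcard : (J \ I).card = k - r)
    (hpow : ∀ p : ℕ, 1 ≤ p → p ≤ s + 1 →
      ∑ t : Fin n, ((if t ∈ I then f t + 1 else f t) + (n : ℤ) - ((t : ℕ) + 1)) ^ p =
      ∑ t : Fin n, ((if t ∈ J then f t + 1 else f t) + (n : ℤ) - ((t : ℕ) + 1)) ^ p) :
    letI x : Fin (k - r) → ℤ := fun t =>
      f ((I \ J).orderIsoOfFin hIJcard t) - ((((I \ J).orderIsoOfFin hIJcard t : Fin n) : ℕ) + 1)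
    letI y : Fin (k - r) → ℤ := fun t =>
      f ((J \ I).orderIsoOfFin hJIcard t) - ((((J \ I).orderIsoOfFin hJIcard t : Fin n) : ℕ) + 1)
    StrictAnti x ∧ StrictAnti y ∧
      (List.ofFn x : Multiset ℤ) ≠ (List.ofFn y : Multiset ℤ) ∧
      ∀ q : ℕ, 1 ≤ q → q ≤ s → ∑ t, x t ^ q = ∑ t, y t ^ q := by
  set A := I \ J with hA
  set B := J \ I with hB
  set x : Fin (k - r) → ℤ := fun t =>
      f (A.orderIsoOfFin hIJcard t) - (((A.orderIsoOfFin hIJcard t : Fin n) : ℕ) + 1)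
    with hxdef
  set y : Fin (k - r) → ℤ := fun t =>
      f (B.orderIsoOfFin hJIcard t) - (((B.orderIsoOfFin hJIcard t : Fin n) : ℕ) + 1)
    with hydef
  set F : Fin n → ℤ := fun t => f t + (n : ℤ) - ((t : ℕ) + 1) with hF
  -- F is strictly antitone
  have hFanti : StrictAnti F := by
    intro i j hij
    have h1 : f j ≤ f i := hf i j (le_of_lt hij)
    have h2 : (i : ℕ) < (j : ℕ) := hij
    simp only [hF]
    omega
  -- rewrite hpow in terms of F
  have hpow' : ∀ p : ℕ, 1 ≤ p → p ≤ s + 1 →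
      ∑ t ∈ A, ((F t + 1) ^ p - F t ^ p) = ∑ t ∈ B, ((F t + 1) ^ p - F t ^ p) := by
    intro p hp1 hp2
    have h0 := hpow p hp1 hp2
    have hI' : ∀ t : Fin n,
        ((if t ∈ I then f t + 1 else f t) + (n : ℤ) - ((t : ℕ) + 1)) =
        F t + (if t ∈ I then 1 else 0) := by
      intro t; simp only [hF]; split_ifs <;> ring
    have hJ' : ∀ t : Fin n,
        ((if t ∈ J then f t + 1 else f t) + (n : ℤ) - ((t : ℕ) + 1)) =
        F t + (if t ∈ J then 1 else 0) := by
      intro t; simp only [hF]; split_ifs <;> ring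
    simp only [hI', hJ'] at h0
    have hdiff : ∑ t : Fin n, ((F t + if t ∈ I then 1 else 0) ^ p
        - (F t + if t ∈ J then 1 else 0) ^ p) = 0 := by
      rw [Finset.sum_sub_distrib, h0, sub_self]
    have hsub : ∑ t : Fin n, ((F t + if t ∈ I then 1 else 0) ^ p
        - (F t + if t ∈ J then 1 else 0) ^ p)
        = ∑ t ∈ A ∪ B, ((F t + if t ∈ I then 1 else 0) ^ p
        - (F t + if t ∈ J then 1 else 0) ^ p) := by
      symm
      apply Finset.sum_subset (Finset.subset_univ _)
      intro t _ ht
      simp only [Finset.mem_union, hA, hB, Finset.mem_sdiff, not_or, not_and, not_not] at ht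
      by_cases h1 : t ∈ I <;> by_cases h2 : t ∈ J <;> simp_all
    have hdisj : Disjoint A B := disjoint_sdiff_sdiff
    rw [hsub, Finset.sum_union hdisj] at hdiff
    have hAval : ∀ t ∈ A, ((F t + if t ∈ I then 1 else 0) ^ p
        - (F t + if t ∈ J then 1 else 0) ^ p) = (F t + 1) ^ p - F t ^ p := by
      intro t ht
      simp only [hA, Finset.mem_sdiff] at ht
      rw [if_pos ht.1, if_neg ht.2, add_zero]
    have hBval : ∀ t ∈ B, ((F t + if t ∈ I then 1 else 0) ^ p
        - (F t + if t ∈ J then 1 else 0) ^ p) = -((F t + 1) ^ p - F t ^ p) := by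
      intro t ht
      simp only [hB, Finset.mem_sdiff] at ht
      rw [if_pos ht.1, if_neg ht.2, add_zero]; ring
    rw [Finset.sum_congr rfl hAval, Finset.sum_congr rfl hBval, Finset.sum_neg_distrib] at hdiff
    linarith [hdiff]
  have hcardAB : A.card = B.card := by rw [hIJcard, hJIcard]
  have hFsum : ∀ q, q ≤ s → ∑ t ∈ A, F t ^ q = ∑ t ∈ B, F t ^ q :=
    key_powsum s A B F hcardAB hpow'
  have hshift : ∀ q, q ≤ s → ∑ t ∈ A, (F t + (-(n : ℤ))) ^ q
      = ∑ t ∈ B, (F t + (-(n : ℤ))) ^ q :=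
    shift_powsum s A B F (-(n : ℤ)) hFsum
  have hFn : ∀ t : Fin n, F t + (-(n : ℤ)) = f t - ((t : ℕ) + 1) := by
    intro t; simp only [hF]; ring
  have hgsum : ∀ q, q ≤ s →
      ∑ t ∈ A, (f t - ((t : ℕ) + 1 : ℤ)) ^ q = ∑ t ∈ B, (f t - ((t : ℕ) + 1 : ℤ)) ^ q := by
    intro q hq
    have := hshift q hq
    simp only [hFn] at this
    exact this
  -- transfer sums over A, B to sums over Fin (k - r)
  have hxsum : ∀ q : ℕ, ∑ t, x t ^ q = ∑ t ∈ A, (f t - ((t : ℕ) + 1 : ℤ)) ^ q := by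
    intro q
    rw [← Finset.sum_coe_sort A (fun t => (f t - ((t : ℕ) + 1 : ℤ)) ^ q)]
    exact Fintype.sum_equiv (A.orderIsoOfFin hIJcard).toEquiv _ _ (fun t => rfl)
  have hysum : ∀ q : ℕ, ∑ t, y t ^ q = ∑ t ∈ B, (f t - ((t : ℕ) + 1 : ℤ)) ^ q := by
    intro q
    rw [← Finset.sum_coe_sort B (fun t => (f t - ((t : ℕ) + 1 : ℤ)) ^ q)]
    exact Fintype.sum_equiv (B.orderIsoOfFin hJIcard).toEquiv _ _ (fun t => rfl)
  -- strict antitonicity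
  have hxanti : StrictAnti x := by
    intro t t' htt
    have h1 : ((A.orderIsoOfFin hIJcard t : Fin n) : Fin n)
        < (A.orderIsoOfFin hIJcard t' : Fin n) := by
      exact_mod_cast (A.orderIsoOfFin hIJcard).strictMono htt
    have h2 : f ((A.orderIsoOfFin hIJcard t' : Fin n)) ≤ f (A.orderIsoOfFin hIJcard t) :=
      hf _ _ (le_of_lt h1)
    have h3 : ((A.orderIsoOfFin hIJcard t : Fin n) : ℕ)
        < ((A.orderIsoOfFin hIJcard t' : Fin n) : ℕ) := h1
    simp only [x]
    omega
  have hyanti : StrictAnti y := by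
    intro t t' htt
    have h1 : ((B.orderIsoOfFin hJIcard t : Fin n) : Fin n)
        < (B.orderIsoOfFin hJIcard t' : Fin n) := by
      exact_mod_cast (B.orderIsoOfFin hJIcard).strictMono htt
    have h2 : f ((B.orderIsoOfFin hJIcard t' : Fin n)) ≤ f (B.orderIsoOfFin hJIcard t) :=
      hf _ _ (le_of_lt h1)
    have h3 : ((B.orderIsoOfFin hJIcard t : Fin n) : ℕ)
        < ((B.orderIsoOfFin hJIcard t' : Fin n) : ℕ) := h1
    simp only [y]
    omega
  -- k - r > 0
  have hApos : 0 < (k - r) := by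
    rw [← hIJcard]
    rw [Finset.card_pos]
    rcases Finset.eq_empty_or_nonempty A with he | hne
    · exfalso
      apply hIJ
      have hsub : I ⊆ J := by
        intro t ht
        by_contra htJ
        have : t ∈ A := Finset.mem_sdiff.mpr ⟨ht, htJ⟩
        simp [he] at this
      exact Finset.eq_of_subset_of_card_le hsub (by rw [hI, hJ])
    · exact hne
  refine ⟨hxanti, hyanti, ?_, ?_⟩
  · -- multisets distinct
    intro hmeq
    haveI : IsAntisymm ℤ (· > ·) := ⟨fun a b h h' => absurd h' (asymm h)⟩
    have hperm : (List.ofFn x).Perm (List.ofFn y) := Multiset.coe_eq_coe.mp hmeq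
    have hsx : List.Pairwise (· > ·) (List.ofFn x) :=
      List.pairwise_ofFn.mpr (fun i j hij => hxanti hij)
    have hsy : List.Pairwise (· > ·) (List.ofFn y) :=
      List.pairwise_ofFn.mpr (fun i j hij => hyanti hij)
    have hlist : List.ofFn x = List.ofFn y := List.Perm.eq_of_pairwise (fun a b _ _ h h' => absurd h' (asymm h)) hsx hsy hperm
    have hfun : x = y := List.ofFn_inj.mp hlist
    -- derive contradiction at t₀
    set t₀ : Fin (k - r) := ⟨0, hApos⟩
    have hxy0 : x t₀ = y t₀ := congrFun hfun t₀
    set iA : Fin n := (A.orderIsoOfFin hIJcard t₀ : Fin n)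
    set iB : Fin n := (B.orderIsoOfFin hJIcard t₀ : Fin n)
    have hFeq : F iA = F iB := by
      have h1 : f iA - (((iA : ℕ) : ℤ) + 1) = f iB - (((iB : ℕ) : ℤ) + 1) := hxy0
      simp only [hF]
      linarith
    have hiAB : iA = iB := hFanti.injective hFeq
    have hmemA : iA ∈ A := (A.orderIsoOfFin hIJcard t₀).2
    have hmemB : iB ∈ B := (B.orderIsoOfFin hJIcard t₀).2
    rw [hiAB] at hmemA
    exact (Finset.disjoint_left.mp disjoint_sdiff_sdiff hmemA) hmemB
  · intro q hq1 hq2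
    rw [hxsum q, hysum q]
    exact hgsum q hq2
end

section
/- Let n and k be positive integers with k \leq n, let f : \{1, ..., n\} \to \mathbb{Z} be nonincreasing (f(1) \geq f(2) \geq ... \geq f(n)), and let I and J be two distinct k-element subsets of \{1, ..., n\}. For a subset A of \{1, ..., n\} define g_A(t) = f(t) + 1 if t \in A and g_A(t) = f(t) otherwise. Suppose that \sum_{t=1}^{n} (g_I(t) + n - t)^p = \sum_{t=1}^{n} (g_J(t) + n - t)^p for every p = 1, 2, ..., k. Then I \cap J = \emptyset. -/
open Finset in
private lemma newton_rec (A : Multiset ℤ) (j : ℕ) :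
    (j : ℤ) * A.esymm j =
      (-1) ^ (j + 1) * ∑ a ∈ (antidiagonal j).filter (fun a => a.1 < j),
        (-1) ^ a.1 * A.esymm a.1 * (A.map (· ^ a.2)).sum := by
  set σ := Fin A.toList.length with hσ
  set fA : σ → ℤ := A.toList.get with hfA
  have huniv : (Finset.univ.val.map fA) = A := by
    rw [Fin.univ_val_map, List.ofFn_get]
    exact A.coe_toList
  have hpsum : ∀ p : ℕ, MvPolynomial.aeval fA (MvPolynomial.psum σ ℤ p)
      = (A.map (· ^ p)).sum := by
    intro p
    rw [MvPolynomial.psum, map_sum]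
    simp only [map_pow, MvPolynomial.aeval_X]
    rw [Finset.sum_eq_multiset_sum]
    conv_rhs => rw [← huniv]
    rw [Multiset.map_map]
    rfl
  have h := congrArg (MvPolynomial.aeval fA) (MvPolynomial.mul_esymm_eq_sum σ ℤ j)
  simpa only [map_mul, map_natCast, map_pow, map_neg, map_one, map_sum,
    MvPolynomial.aeval_esymm_eq_multiset_esymm, huniv, hpsum] using h

open Finset in
private lemma esymm_eq_of_psum (m : ℕ) (A B : Multiset ℤ)
    (hp : ∀ p, 1 ≤ p → p ≤ m → (A.map (· ^ p)).sum = (B.map (· ^ p)).sum) :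
    ∀ j, j ≤ m → A.esymm j = B.esymm j := by
  intro j
  induction j using Nat.strong_induction_on with
  | _ j ih =>
    intro hjm
    rcases Nat.eq_zero_or_pos j with rfl | hj
    · simp [Multiset.esymm]
    · have hsum : ∑ a ∈ (antidiagonal j).filter (fun a => a.1 < j),
          (-1 : ℤ) ^ a.1 * A.esymm a.1 * (A.map (· ^ a.2)).sum =
        ∑ a ∈ (antidiagonal j).filter (fun a => a.1 < j),
          (-1 : ℤ) ^ a.1 * B.esymm a.1 * (B.map (· ^ a.2)).sum := by
        refine Finset.sum_congr rfl fun a ha => ?_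
        rw [Finset.mem_filter, Finset.HasAntidiagonal.mem_antidiagonal] at ha
        rw [ih a.1 ha.2 (by omega), hp a.2 (by omega) (by omega)]
      have h1 := newton_rec A j
      have h2 := newton_rec B j
      rw [hsum, ← h2] at h1
      exact mul_left_cancel₀ (by exact_mod_cast hj.ne') h1

private lemma multiset_eq_of_psum (m : ℕ) (A B : Multiset ℤ)
    (hA : Multiset.card A = m) (hB : Multiset.card B = m)
    (hp : ∀ p, 1 ≤ p → p ≤ m → (A.map (· ^ p)).sum = (B.map (· ^ p)).sum) :
    A = B := by
  have hes := esymm_eq_of_psum m A B hp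
  have hPA : (A.map (fun a => Polynomial.X - Polynomial.C a)).prod =
      (B.map (fun a => Polynomial.X - Polynomial.C a)).prod := by
    apply Polynomial.ext
    intro c
    rcases le_or_gt c m with hc | hc
    · rw [Multiset.prod_X_sub_C_coeff A (by rw [hA]; exact hc),
        Multiset.prod_X_sub_C_coeff B (by rw [hB]; exact hc), hA, hB,
        hes (m - c) (Nat.sub_le _ _)]
    · rw [Polynomial.coeff_eq_zero_of_natDegree_lt
        (by rw [Polynomial.natDegree_multiset_prod_X_sub_C_eq_card, hA]; exact hc),
        Polynomial.coeff_eq_zero_of_natDegree_lt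
        (by rw [Polynomial.natDegree_multiset_prod_X_sub_C_eq_card, hB]; exact hc)]
  have := Polynomial.roots_multiset_prod_X_sub_C A
  rw [hPA, Polynomial.roots_multiset_prod_X_sub_C B] at this
  exact this.symm

/-- Corollary 6.4 (combinatorial form).  Indices `1, …, n` are encoded by
`Fin n` (so the index `t` has value `t.1 + 1`), `f` is a nonincreasing Young
pattern, `I, J` are distinct `k`-element index sets, and `g_A(t) = f(t) + 1`
if `t ∈ A`, `g_A(t) = f(t)` otherwise.  If the power sums
`∑_t (g_I(t) + n - t)^p` and `∑_t (g_J(t) + n - t)^p` agree for `p = 1, …, k`,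
then `I ∩ J = ∅`. -/
theorem inter_eq_empty_of_central_characters_eq
    (n k : ℕ) (hn : 0 < n) (hk : 0 < k) (hkn : k ≤ n)
    (f : Fin n → ℤ) (hf : ∀ i j : Fin n, i ≤ j → f j ≤ f i)
    (I J : Finset (Fin n)) (hI : I.card = k) (hJ : J.card = k) (hIJ : I ≠ J)
    (hpow : ∀ p : ℕ, 1 ≤ p → p ≤ k →
      ∑ t : Fin n, ((if t ∈ I then f t + 1 else f t) + (n : ℤ) - ((t : ℕ) + 1)) ^ p =
      ∑ t : Fin n, ((if t ∈ J then f t + 1 else f t) + (n : ℤ) - ((t : ℕ) + 1)) ^ p) :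
    I ∩ J = ∅ := by
  set h : Fin n → ℤ := fun t => f t + n - ((t : ℕ) + 1) with hh
  have hmono : ∀ t s : Fin n, t < s → h s < h t := by
    intro t s hts
    have h1 := hf t s hts.le
    have h2 : (t : ℕ) + 1 ≤ (s : ℕ) := hts
    have h2' : ((t : ℕ) : ℤ) + 1 ≤ ((s : ℕ) : ℤ) := by exact_mod_cast h2
    simp only [hh]
    linarith
  have hinj : Function.Injective h := by
    intro t s hts'
    rcases lt_trichotomy t s with hl | he | hl
    · exact absurd hts' (hmono t s hl).ne'
    · exact he
    · exact absurd hts' (hmono s t hl).ne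
  -- Step 2: difference sums over I and J
  have key : ∀ p, 1 ≤ p → p ≤ k →
      ∑ t ∈ I \ J, ((h t + 1) ^ p - h t ^ p) =
      ∑ t ∈ J \ I, ((h t + 1) ^ p - h t ^ p) := by
    intro p h1 h2
    have hp := hpow p h1 h2
    have expand : ∀ (K : Finset (Fin n)),
        ∑ t : Fin n, ((if t ∈ K then f t + 1 else f t) + (n : ℤ) - ((t : ℕ) + 1)) ^ p
        = ∑ t : Fin n, (h t) ^ p + ∑ t ∈ K, ((h t + 1) ^ p - (h t) ^ p) := by
      intro K
      have e : ∀ t : Fin n,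
          ((if t ∈ K then f t + 1 else f t) + (n : ℤ) - ((t : ℕ) + 1)) ^ p
          = (h t) ^ p + (if t ∈ K then (h t + 1) ^ p - (h t) ^ p else 0) := by
        intro t
        by_cases ht : t ∈ K
        · simp only [if_pos ht, hh]
          ring_nf
        · simp only [if_neg ht, hh]
          ring
      rw [Finset.sum_congr rfl fun t _ => e t, Finset.sum_add_distrib,
        Finset.sum_ite_mem, Finset.univ_inter]
    rw [expand I, expand J] at hp
    have hp2 : ∑ t ∈ I, ((h t + 1) ^ p - (h t) ^ p) =
        ∑ t ∈ J, ((h t + 1) ^ p - (h t) ^ p) := by linarith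
    have hI2 := Finset.sum_inter_add_sum_sdiff I J (fun t => (h t + 1) ^ p - (h t) ^ p)
    have hJ2 := Finset.sum_inter_add_sum_sdiff J I (fun t => (h t + 1) ^ p - (h t) ^ p)
    rw [Finset.inter_comm J I] at hJ2
    linarith
  -- Step 3: equal power sums up to k-1
  have claim : ∀ p, p < k → ∑ t ∈ I \ J, (h t) ^ p = ∑ t ∈ J \ I, (h t) ^ p := by
    intro p
    induction p using Nat.strong_induction_on with
    | _ p ih =>
      intro hpk
      have hk1 := key (p + 1) (by omega) (by omega)
      have expand : ∀ t : Fin n, (h t + 1) ^ (p + 1) - (h t) ^ (p + 1)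
          = ∑ i ∈ Finset.range (p + 1), (h t) ^ i * ((p + 1).choose i : ℤ) := by
        intro t
        rw [add_pow, Finset.sum_range_succ]
        simp [Nat.choose_self]
      have hswap : ∀ (K : Finset (Fin n)),
          ∑ t ∈ K, ((h t + 1) ^ (p + 1) - h t ^ (p + 1))
          = ∑ i ∈ Finset.range (p + 1), (∑ t ∈ K, (h t) ^ i) * ((p + 1).choose i : ℤ) := by
        intro K
        rw [Finset.sum_congr rfl fun t _ => expand t, Finset.sum_comm]
        exact Finset.sum_congr rfl fun i _ => (Finset.sum_mul _ _ _).symm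
      rw [hswap, hswap, Finset.sum_range_succ, Finset.sum_range_succ] at hk1
      have heq : ∑ i ∈ Finset.range p, (∑ t ∈ I \ J, (h t) ^ i) * ((p + 1).choose i : ℤ)
          = ∑ i ∈ Finset.range p, (∑ t ∈ J \ I, (h t) ^ i) * ((p + 1).choose i : ℤ) := by
        refine Finset.sum_congr rfl fun i hi => ?_
        rw [Finset.mem_range] at hi
        rw [ih i hi (by omega)]
      rw [heq] at hk1
      have hk2 : (∑ t ∈ I \ J, (h t) ^ p) * ((p + 1).choose p : ℤ)
          = (∑ t ∈ J \ I, (h t) ^ p) * ((p + 1).choose p : ℤ) := by linarith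
      have hc : ((p + 1).choose p : ℤ) ≠ 0 := by
        rw [Nat.choose_succ_self_right]
        exact_mod_cast Nat.succ_ne_zero p
      exact mul_right_cancel₀ hc hk2
  -- Step 4: conclude
  by_contra hne
  have hr : 1 ≤ (I ∩ J).card :=
    Finset.card_pos.mpr (Finset.nonempty_iff_ne_empty.mpr hne)
  have hrk : (I ∩ J).card ≤ k := hI ▸ Finset.card_le_card (Finset.inter_subset_left)
  set m := k - (I ∩ J).card with hm
  have hcardX : (I \ J).card = m := by
    have := Finset.card_sdiff_add_card_inter I J
    omega
  have hcardY : (J \ I).card = m := by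
    have := Finset.card_sdiff_add_card_inter J I
    rw [Finset.inter_comm J I] at this
    omega
  set A : Multiset ℤ := (I \ J).val.map h with hA
  set B : Multiset ℤ := (J \ I).val.map h with hB
  have hAc : Multiset.card A = m := by rw [hA, Multiset.card_map]; exact hcardX
  have hBc : Multiset.card B = m := by rw [hB, Multiset.card_map]; exact hcardY
  have hps : ∀ p, 1 ≤ p → p ≤ m → (A.map (· ^ p)).sum = (B.map (· ^ p)).sum := by
    intro p h1 h2
    have := claim p (by omega)
    simpa [hA, hB, Multiset.map_map, Finset.sum_eq_multiset_sum, Function.comp] using this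
  have hABeq : A = B := multiset_eq_of_psum m A B hAc hBc hps
  have hXne : (I \ J).Nonempty := by
    rw [Finset.sdiff_nonempty]
    intro hsub
    exact hIJ (Finset.eq_of_subset_of_card_le hsub (by omega))
  obtain ⟨t, ht⟩ := hXne
  have htA : h t ∈ B := by
    rw [← hABeq, hA]
    exact Multiset.mem_map_of_mem h ht
  obtain ⟨s, hs, hst⟩ := Multiset.mem_map.mp htA
  have hts : s = t := hinj hst
  rw [hts] at hs
  have ht' := Finset.mem_sdiff.mp ht
  have hs' := Finset.mem_sdiff.mp hs
  exact hs'.2 ht'.1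
end
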